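/- Any deterministic strategyproof mechanism has an approximation ratio of at least 4 for minimizing IIF_1. Formally, for every epsilon > 0, no deterministic partial-group-strategyproof mechanism achieves approximation ratio 4 - epsilon for IIF_1 on all profiles with two groups. -/

import Mathlib

open Finset

variable {n m : ℕ}

/-- Members of group `j`. -/
def grp (g : Fin n → Fin m) (j : Fin m) : Finset (Fin n) :=
  Finset.univ.filter (fun i => g i = j)

/-- Maximum total group cost. -/
noncomputable def mtgc (x : Fin n → ℝ) (g : Fin n → Fin m) (y : ℝ) : ℝ :=
  ⨆ j : Fin m, ∑ i ∈ grp g j, |y - x i|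

/-- Maximum average group cost. -/
noncomputable def magc (x : Fin n → ℝ) (g : Fin n → Fin m) (y : ℝ) : ℝ :=
  ⨆ j : Fin m, (∑ i ∈ grp g j, |y - x i|) / (grp g j).card

/-- Left median of a multiset of reals (`⌈k/2⌉`-th smallest). -/
noncomputable def medianOf (s : Multiset ℝ) : ℝ :=
  (s.sort (· ≤ ·)).getD ((Multiset.card s - 1) / 2) 0

/-- Left median of the locations of the members of group `j`. -/
noncomputable def groupMedian (x : Fin n → ℝ) (g : Fin n → Fin m) (j : Fin m) : ℝ :=
  medianOf ((grp g j).val.map x)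

/-- A largest group, ties broken by the smallest index. -/
noncomputable def majGroup (g : Fin n → Fin m) [NeZero m] : Fin m :=
  (Finset.univ.filter
    (fun j => ∀ k : Fin m, (grp g k).card ≤ (grp g j).card)).min' (by
      obtain ⟨b, -, hb⟩ :=
        Finset.exists_max_image Finset.univ (fun j => (grp g j).card) Finset.univ_nonempty
      exact ⟨b, Finset.mem_filter.mpr ⟨Finset.mem_univ _, fun k => hb k (Finset.mem_univ k)⟩⟩)

/-- Majority Group Deterministic Mechanism. -/
noncomputable def MGDM (x : Fin n → ℝ) (g : Fin n → Fin m) [NeZero m] : ℝ :=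
  groupMedian x g (majGroup g)

noncomputable def avgc (x : Fin n → ℝ) (g : Fin n → Fin m) (j : Fin m) (y : ℝ) : ℝ :=
  (∑ i ∈ grp g j, |y - x i|) / (grp g j).card

noncomputable def maxc (x : Fin n → ℝ) (g : Fin n → Fin m) (j : Fin m) (y : ℝ) : ℝ :=
  sSup ((fun i => |y - x i|) '' {i | g i = j})

noncomputable def minc (x : Fin n → ℝ) (g : Fin n → Fin m) (j : Fin m) (y : ℝ) : ℝ :=
  sInf ((fun i => |y - x i|) '' {i | g i = j})

noncomputable def IIF1 (x : Fin n → ℝ) (g : Fin n → Fin m) (y : ℝ) : ℝ :=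
  (⨆ j : Fin m, avgc x g j y) + ⨆ j : Fin m, (maxc x g j y - minc x g j y)
/-- Partial group strategyproofness for a mechanism defined on all two-group
profiles: a set of co-located agents cannot strictly benefit by jointly
misreporting their locations. -/
def PGSP (f : ∀ n : ℕ, (Fin n → ℝ) → (Fin n → Fin 2) → ℝ) : Prop :=
  ∀ (n : ℕ) (x : Fin n → ℝ) (g : Fin n → Fin 2) (S : Finset (Fin n)) (x0 x' : ℝ),
    (∀ i ∈ S, x i = x0) →
    |f n x g - x0| ≤ |f n (fun i => if i ∈ S then x' else x i) g - x0|


lemma sum_split2 {M : Type*} [AddCommMonoid M] (k : ℕ) (F : ℕ → M) :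
    ∑ i ∈ Finset.range (2*k+2), F i =
      (F 0 + ∑ i ∈ Finset.range k, F (i+1)) +
      (F (k+1) + ∑ i ∈ Finset.range k, F (k+2+i)) := by
  have h : 2*k+2 = (k+1) + (k+1) := by ring
  rw [h, Finset.sum_range_add]
  congr 1
  · rw [Finset.sum_range_succ']; exact add_comm _ _
  · rw [Finset.sum_range_succ', add_comm]
    simp only [Nat.add_zero]
    congr 1
    exact Finset.sum_congr rfl (fun i _ => by congr 1; omega)

def Gn (k : ℕ) (i : ℕ) : Fin 2 :=
  if i < k+1 then (if i = 0 then 0 else 1) else (if i = k+1 then 1 else 0)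

noncomputable def Xn (k : ℕ) (a b : ℝ) (i : ℕ) : ℝ := if i < k+1 then a else b

def gk (k : ℕ) : Fin (2*k+2) → Fin 2 := fun i => Gn k i
noncomputable def xk (k : ℕ) (a b : ℝ) : Fin (2*k+2) → ℝ := fun i => Xn k a b i

lemma Gn_left0 (k : ℕ) : Gn k 0 = 0 := by simp [Gn]
lemma Gn_left1 (k i : ℕ) (h : i < k) : Gn k (i+1) = 1 := by simp [Gn]; omega
lemma Gn_right1 (k : ℕ) : Gn k (k+1) = 1 := by simp [Gn]
lemma Gn_right0 (k i : ℕ) : Gn k (k+2+i) = 0 := by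
  have h1 : ¬ (k+2+i < k+1) := by omega
  have h2 : ¬ (k+2+i = k+1) := by omega
  simp [Gn, h1, h2]
lemma Xn_left (k : ℕ) (a b : ℝ) (i : ℕ) (h : i < k+1) : Xn k a b i = a := by simp [Xn, h]
lemma Xn_right (k : ℕ) (a b : ℝ) (i : ℕ) (h : ¬ i < k+1) : Xn k a b i = b := by simp [Xn, h]

lemma fin_sum_eq {M : Type*} [AddCommMonoid M] (k : ℕ) (F : ℕ → M) :
    ∑ i : Fin (2*k+2), F (i : ℕ) =
      (F 0 + ∑ i ∈ Finset.range k, F (i+1)) +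
      (F (k+1) + ∑ i ∈ Finset.range k, F (k+2+i)) := by
  rw [Fin.sum_univ_eq_sum_range F (2*k+2), sum_split2]


lemma fin2_ne : (1 : Fin 2) ≠ 0 := by decide

lemma sum_grp0 (k : ℕ) {M : Type*} [AddCommMonoid M] (c : ℕ → M) :
    ∑ i ∈ grp (gk k) 0, c (i : ℕ) = c 0 + ∑ i ∈ Finset.range k, c (k+2+i) := by
  rw [grp, Finset.sum_filter]
  have h : ∀ i : Fin (2*k+2), (if gk k i = 0 then c (i : ℕ) else 0)
      = (fun t : ℕ => if Gn k t = 0 then c t else 0) (i : ℕ) := fun i => rfl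
  rw [Finset.sum_congr rfl (fun i _ => h i),
    fin_sum_eq k (fun t : ℕ => if Gn k t = 0 then c t else 0)]
  rw [Gn_left0, if_pos rfl, Gn_right1, if_neg fin2_ne,
    Finset.sum_eq_zero (fun i hi => by
      rw [Gn_left1 k i (Finset.mem_range.mp hi), if_neg fin2_ne]),
    Finset.sum_congr rfl (fun i _ => by rw [Gn_right0, if_pos rfl])]
  abel

lemma sum_grp1 (k : ℕ) {M : Type*} [AddCommMonoid M] (c : ℕ → M) :
    ∑ i ∈ grp (gk k) 1, c (i : ℕ) = (∑ i ∈ Finset.range k, c (i+1)) + c (k+1) := by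
  rw [grp, Finset.sum_filter]
  have h : ∀ i : Fin (2*k+2), (if gk k i = 1 then c (i : ℕ) else 0)
      = (fun t : ℕ => if Gn k t = 1 then c t else 0) (i : ℕ) := fun i => rfl
  rw [Finset.sum_congr rfl (fun i _ => h i),
    fin_sum_eq k (fun t : ℕ => if Gn k t = 1 then c t else 0)]
  have h1 : ∑ i ∈ Finset.range k, (if Gn k (i+1) = 1 then c (i+1) else 0)
      = ∑ i ∈ Finset.range k, c (i+1) :=
    Finset.sum_congr rfl (fun i hi => by
      rw [Gn_left1 k i (Finset.mem_range.mp hi), if_pos rfl])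
  have h2 : ∑ i ∈ Finset.range k, (if Gn k (k+2+i) = 1 then c (k+2+i) else 0) = 0 :=
    Finset.sum_eq_zero (fun i hi => by rw [Gn_right0, if_neg fin2_ne.symm])
  rw [h1, h2, Gn_left0, if_neg fin2_ne.symm, Gn_right1, if_pos rfl]
  abel

lemma card_grp0 (k : ℕ) : (grp (gk k) 0).card = k + 1 := by
  rw [Finset.card_eq_sum_ones, sum_grp0 k (fun _ => (1:ℕ))]
  simp [Finset.sum_const, Finset.card_range]
  omega

lemma card_grp1 (k : ℕ) : (grp (gk k) 1).card = k + 1 := by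
  rw [Finset.card_eq_sum_ones, sum_grp1 k (fun _ => (1:ℕ))]
  simp [Finset.sum_const, Finset.card_range]

lemma sum_abs0 (k : ℕ) (a b y : ℝ) :
    ∑ i ∈ grp (gk k) 0, |y - xk k a b i| = |y - a| + k * |y - b| := by
  have h : ∀ i : Fin (2*k+2), |y - xk k a b i| = (fun t => |y - Xn k a b t|) (i:ℕ) := fun _ => rfl
  rw [Finset.sum_congr rfl (fun i _ => h i), sum_grp0 k (fun t => |y - Xn k a b t|)]
  rw [Xn_left k a b 0 (by omega),
    Finset.sum_congr rfl (fun i _ => by rw [Xn_right k a b (k+2+i) (by omega)]),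
    Finset.sum_const, Finset.card_range, nsmul_eq_mul]

lemma sum_abs1 (k : ℕ) (a b y : ℝ) :
    ∑ i ∈ grp (gk k) 1, |y - xk k a b i| = k * |y - a| + |y - b| := by
  have h : ∀ i : Fin (2*k+2), |y - xk k a b i| = (fun t => |y - Xn k a b t|) (i:ℕ) := fun _ => rfl
  rw [Finset.sum_congr rfl (fun i _ => h i), sum_grp1 k (fun t => |y - Xn k a b t|)]
  rw [Xn_right k a b (k+1) (by omega),
    Finset.sum_congr rfl (fun i hi => by
      rw [Xn_left k a b (i+1) (by have := Finset.mem_range.mp hi; omega)]),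
    Finset.sum_const, Finset.card_range, nsmul_eq_mul]

lemma image_eq (k : ℕ) (hk : 1 ≤ k) (a b y : ℝ) (j : Fin 2) :
    ((fun i => |y - xk k a b i|) '' {i | gk k i = j}) = {|y - a|, |y - b|} := by
  ext z
  constructor
  · rintro ⟨i, hi, rfl⟩
    by_cases h : (i : ℕ) < k+1
    · left; show |y - Xn k a b (i:ℕ)| = _; rw [Xn_left k a b _ h]
    · right; show |y - Xn k a b (i:ℕ)| = _; rw [Xn_right k a b _ h]
  · intro hz
    rcases hz with hz | hz
    · subst hz
      fin_cases j
      · exact ⟨⟨0, by omega⟩, by simp [gk, Gn], by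
          show |y - Xn k a b 0| = _; rw [Xn_left k a b 0 (by omega)]⟩
      · exact ⟨⟨1, by omega⟩, by simp [gk, Gn], by
          show |y - Xn k a b 1| = _; rw [Xn_left k a b 1 (by omega)]⟩
    · rcases hz with rfl
      fin_cases j
      · exact ⟨⟨k+2, by omega⟩, by
          have h1 : ¬ (k+2 < k+1) := by omega
          have h2 : ¬ (k+2 = k+1) := by omega
          simp [gk, Gn, h1, h2], by
          show |y - Xn k a b (k+2)| = _; rw [Xn_right k a b _ (by omega)]⟩
      · exact ⟨⟨k+1, by omega⟩, by
          have h1 : ¬ (k+1 < k+1) := by omega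
          simp [gk, Gn, h1], by
          show |y - Xn k a b (k+1)| = _; rw [Xn_right k a b _ (by omega)]⟩

lemma iSup_fin2 (f : Fin 2 → ℝ) : (⨆ j : Fin 2, f j) = max (f 0) (f 1) := by
  apply le_antisymm
  · refine ciSup_le (fun j => ?_)
    fin_cases j
    · exact le_max_left _ _
    · exact le_max_right _ _
  · exact max_le (le_ciSup (Set.Finite.bddAbove (Set.finite_range f)) 0)
      (le_ciSup (Set.Finite.bddAbove (Set.finite_range f)) 1)

lemma IIF1_formula (k : ℕ) (hk : 1 ≤ k) (a b y : ℝ) :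
    IIF1 (xk k a b) (gk k) y =
      max ((|y - a| + k * |y - b|) / (k+1)) ((k * |y - a| + |y - b|) / (k+1)) +
      (max |y - a| |y - b| - min |y - a| |y - b|) := by
  rw [IIF1, iSup_fin2, iSup_fin2, avgc, avgc, sum_abs0, sum_abs1, card_grp0, card_grp1,
    maxc, maxc, minc, minc, image_eq k hk a b y 0, image_eq k hk a b y 1,
    csSup_pair, csInf_pair]
  push_cast
  rw [max_self]

lemma IIF1_at_b (k : ℕ) (hk : 1 ≤ k) (a t : ℝ) (ht : 0 ≤ t) :
    IIF1 (xk k a (a+t)) (gk k) (a+t) = k*t/(k+1) + t := by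
  rw [IIF1_formula k hk a (a+t) (a+t)]
  have e1 : |a + t - a| = t := by rw [show a + t - a = t by ring, abs_of_nonneg ht]
  have e2 : |a + t - (a+t)| = 0 := by rw [sub_self, abs_zero]
  rw [e1, e2]
  have hK : (1:ℝ) ≤ (k:ℝ) := by exact_mod_cast hk
  have hmax : max ((t + (k:ℝ)*0)/((k:ℝ)+1)) (((k:ℝ)*t + 0)/((k:ℝ)+1)) = (k:ℝ)*t/((k:ℝ)+1) := by
    rw [mul_zero, add_zero, add_zero]
    apply max_eq_right
    gcongr (?_ / ?_)
    · nlinarith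
  rw [hmax, max_eq_left ht, min_eq_right ht, sub_zero]

lemma IIF1_at_a (k : ℕ) (hk : 1 ≤ k) (a t : ℝ) (ht : 0 ≤ t) :
    IIF1 (xk k a (a+t)) (gk k) a = k*t/(k+1) + t := by
  rw [IIF1_formula k hk a (a+t) a]
  have e1 : |a - a| = 0 := by rw [sub_self, abs_zero]
  have e2 : |a - (a+t)| = t := by rw [show a - (a+t) = -t by ring, abs_neg, abs_of_nonneg ht]
  rw [e1, e2]
  have hK : (1:ℝ) ≤ (k:ℝ) := by exact_mod_cast hk
  have hmax : max ((0 + (k:ℝ)*t)/((k:ℝ)+1)) (((k:ℝ)*0 + t)/((k:ℝ)+1)) = (k:ℝ)*t/((k:ℝ)+1) := by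
    rw [mul_zero, zero_add, zero_add]
    apply max_eq_left
    gcongr (?_ / ?_)
    · nlinarith
  rw [hmax, max_eq_right ht, min_eq_left ht, sub_zero]

lemma IIF1_at_mid (k : ℕ) (hk : 1 ≤ k) (a t : ℝ) (ht : 0 ≤ t) :
    IIF1 (xk k a (a+t)) (gk k) (a+t/2) = t/2 := by
  rw [IIF1_formula k hk a (a+t) (a+t/2)]
  have e1 : |a + t/2 - a| = t/2 := by
    rw [show a + t/2 - a = t/2 by ring, abs_of_nonneg (by linarith)]
  have e2 : |a + t/2 - (a+t)| = t/2 := by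
    rw [show a + t/2 - (a+t) = -(t/2) by ring, abs_neg, abs_of_nonneg (by linarith)]
  rw [e1, e2, max_self, min_self, sub_self, add_zero,
    show (t/2 + (k:ℝ)*(t/2)) = ((k:ℝ)*(t/2) + t/2) by ring, max_self]
  have hK : (0:ℝ) < (k:ℝ)+1 := by positivity
  field_simp

lemma endgame (ε : ℝ) (k : ℕ) (t : ℝ) (ht : 0 < t) (hke : 2 < ε * ((k:ℝ)+1))
    (h : (k:ℝ)*t/((k:ℝ)+1) + t ≤ (4-ε)*(t/2)) : False := by
  have hK : (0:ℝ) < (k:ℝ)+1 := by positivity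
  rw [div_add' _ _ _ (ne_of_gt hK), div_le_iff₀ hK] at h
  nlinarith [mul_pos (show (0:ℝ) < ε * ((k:ℝ)+1) - 2 by linarith) ht]

lemma gk_surj (k : ℕ) : Function.Surjective (gk k) := by
  intro b
  fin_cases b
  · exact ⟨⟨0, by omega⟩, by simp [gk, Gn]⟩
  · exact ⟨⟨k+1, by omega⟩, by simp [gk, Gn]⟩

/-- Any deterministic partial-group-strategyproof mechanism has approximation
ratio at least 4 for minimizing `IIF₁`: for every `ε > 0` no such mechanism
achieves ratio `4 - ε` on all two-group profiles. -/
theorem stmt18 (ε : ℝ) (hε : 0 < ε) :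
    ¬ ∃ f : ∀ n : ℕ, (Fin n → ℝ) → (Fin n → Fin 2) → ℝ, PGSP f ∧
      ∀ (n : ℕ) (x : Fin n → ℝ) (g : Fin n → Fin 2), Function.Surjective g →
        ∀ y : ℝ, IIF1 x g (f n x g) ≤ (4 - ε) * IIF1 x g y := by
  rintro ⟨f, hSP, hratio⟩
  set k : ℕ := ⌈2/ε⌉₊ + 1 with hkdef
  have hk1 : 1 ≤ k := Nat.le_add_left 1 _
  have hke : 2 < ε * ((k:ℝ)+1) := by
    have h2 : 2/ε ≤ ((⌈2/ε⌉₊ : ℕ) : ℝ) := Nat.le_ceil _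
    have h3 : ((⌈2/ε⌉₊ : ℕ) : ℝ) ≤ (k:ℝ) := by exact_mod_cast Nat.le_succ _
    have h4 : ε * (2/ε) = 2 := by field_simp
    nlinarith [mul_le_mul_of_nonneg_left (le_trans h2 h3) hε.le]
  set p := f (2*k+2) (xk k 0 1) (gk k) with hpdef
  by_cases hp0 : 0 < p
  · -- facility is at p > 0; move the right agents from 1 to p
    set S : Finset (Fin (2*k+2)) :=
      Finset.univ.filter (fun i => ¬ ((i:ℕ) < k+1)) with hSdef
    have hS : ∀ i ∈ S, xk k 0 p i = p := fun i hi =>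
      Xn_right k 0 p _ (Finset.mem_filter.mp hi).2
    have hfun : (fun i => if i ∈ S then (1:ℝ) else xk k 0 p i) = xk k 0 1 := by
      funext i
      by_cases h : (i:ℕ) < k+1
      · have hns : i ∉ S := fun hm => (Finset.mem_filter.mp hm).2 h
        rw [if_neg hns]
        show Xn k 0 p i = Xn k 0 1 i
        rw [Xn_left k 0 p _ h, Xn_left k 0 1 _ h]
      · have hs : i ∈ S := Finset.mem_filter.mpr ⟨Finset.mem_univ _, h⟩
        rw [if_pos hs]
        exact (Xn_right k 0 1 _ h).symm
    have hgsp := hSP (2*k+2) (xk k 0 p) (gk k) S p 1 hS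
    rw [hfun, ← hpdef, sub_self, abs_zero] at hgsp
    have hfr : f (2*k+2) (xk k 0 p) (gk k) = p := by
      have h0 : |f (2*k+2) (xk k 0 p) (gk k) - p| = 0 :=
        le_antisymm hgsp (abs_nonneg _)
      have := abs_eq_zero.mp h0
      linarith [sub_eq_zero.mp this]
    have hr := hratio (2*k+2) (xk k 0 p) (gk k) (gk_surj k) (p/2)
    rw [hfr] at hr
    have hv1 : IIF1 (xk k 0 p) (gk k) p = k*p/(k+1) + p := by
      have := IIF1_at_b k hk1 0 p hp0.le
      simpa using this
    have hv2 : IIF1 (xk k 0 p) (gk k) (p/2) = p/2 := by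
      have := IIF1_at_mid k hk1 0 p hp0.le
      simpa using this
    rw [hv1, hv2] at hr
    exact endgame ε k p hp0 hke hr
  · -- facility is at p ≤ 0; move the left agents from 0 to p
    have hp1 : 0 < 1 - p := by push_neg at hp0; linarith
    set S : Finset (Fin (2*k+2)) :=
      Finset.univ.filter (fun i => (i:ℕ) < k+1) with hSdef
    have hS : ∀ i ∈ S, xk k p 1 i = p := fun i hi =>
      Xn_left k p 1 _ (Finset.mem_filter.mp hi).2
    have hfun : (fun i => if i ∈ S then (0:ℝ) else xk k p 1 i) = xk k 0 1 := by
      funext i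
      by_cases h : (i:ℕ) < k+1
      · have hs : i ∈ S := Finset.mem_filter.mpr ⟨Finset.mem_univ _, h⟩
        rw [if_pos hs]
        exact (Xn_left k 0 1 _ h).symm
      · have hns : i ∉ S := fun hm => h (Finset.mem_filter.mp hm).2
        rw [if_neg hns]
        show Xn k p 1 i = Xn k 0 1 i
        rw [Xn_right k p 1 _ h, Xn_right k 0 1 _ h]
    have hgsp := hSP (2*k+2) (xk k p 1) (gk k) S p 0 hS
    rw [hfun, ← hpdef, sub_self, abs_zero] at hgsp
    have hfr : f (2*k+2) (xk k p 1) (gk k) = p := by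
      have h0 : |f (2*k+2) (xk k p 1) (gk k) - p| = 0 :=
        le_antisymm hgsp (abs_nonneg _)
      have := abs_eq_zero.mp h0
      linarith [sub_eq_zero.mp this]
    have hr := hratio (2*k+2) (xk k p 1) (gk k) (gk_surj k) (p + (1-p)/2)
    rw [hfr] at hr
    have e : p + (1-p) = 1 := by ring
    have hv1 : IIF1 (xk k p 1) (gk k) p = k*(1-p)/(k+1) + (1-p) := by
      have := IIF1_at_a k hk1 p (1-p) hp1.le
      rwa [e] at this
    have hv2 : IIF1 (xk k p 1) (gk k) (p + (1-p)/2) = (1-p)/2 := by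
      have := IIF1_at_mid k hk1 p (1-p) hp1.le
      rwa [e] at this
    rw [hv1, hv2] at hr
    exact endgame ε k (1-p) hp1 hke hr
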